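/- arXiv:2311.00327 — 3 statements merged into one kernel-verified Lean document; each statement's English description precedes it below -/
import Mathlib

section
/- Let Λ ∈ ℝ^{p×p} be symmetric positive definite, M ∈ ℝ^{p×p} symmetric positive semidefinite, and V := Λ + M. Then for all vectors w, θ ∈ ℝ^p, |wᵀ V⁻¹ Λ θ| ≤ ‖θ‖_Λ · ‖w‖_{V⁻¹}, where ‖x‖_A := √(xᵀAx) for a positive semidefinite matrix A. -/
open Matrix
open scoped MatrixOrder

lemma abs_dotProduct_le_sqrt {p : ℕ} (a b : Fin p → ℝ) :
    |a ⬝ᵥ b| ≤ Real.sqrt (a ⬝ᵥ a) * Real.sqrt (b ⬝ᵥ b) := by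
  have h := Finset.sum_mul_sq_le_sq_mul_sq Finset.univ a b
  have e1 : a ⬝ᵥ a = ∑ i, a i ^ 2 := by simp [dotProduct, sq]
  have e2 : b ⬝ᵥ b = ∑ i, b i ^ 2 := by simp [dotProduct, sq]
  have h2 : (a ⬝ᵥ b) ^ 2 ≤ (a ⬝ᵥ a) * (b ⬝ᵥ b) := by
    rw [e1, e2]; simpa [dotProduct] using h
  calc |a ⬝ᵥ b| = Real.sqrt ((a ⬝ᵥ b) ^ 2) := (Real.sqrt_sq_eq_abs _).symm
    _ ≤ Real.sqrt ((a ⬝ᵥ a) * (b ⬝ᵥ b)) := Real.sqrt_le_sqrt h2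
    _ = Real.sqrt (a ⬝ᵥ a) * Real.sqrt (b ⬝ᵥ b) := Real.sqrt_mul
        (e1 ▸ Finset.sum_nonneg fun i _ => sq_nonneg (a i)) _

/-- Let `Λ ∈ ℝ^{p×p}` be symmetric positive definite, `M ∈ ℝ^{p×p}` symmetric positive
semidefinite, and `V := Λ + M`. Then for all `w, θ ∈ ℝ^p`,
`|wᵀ V⁻¹ Λ θ| ≤ ‖θ‖_Λ ⬝ ‖w‖_{V⁻¹}`, where `‖x‖_A := √(xᵀ A x)`. -/
theorem abs_dotProduct_inv_reg_le {p : ℕ} (Λ M : Matrix (Fin p) (Fin p) ℝ)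
    (hΛ : Λ.PosDef) (hM : M.PosSemidef) (w θ : Fin p → ℝ) :
    |w ⬝ᵥ (((Λ + M)⁻¹ * Λ) *ᵥ θ)| ≤
      Real.sqrt (θ ⬝ᵥ (Λ *ᵥ θ)) * Real.sqrt (w ⬝ᵥ ((Λ + M)⁻¹ *ᵥ w)) := by
  set V := Λ + M with hVdef
  have hV : V.PosDef := hΛ.add_posSemidef hM
  have hVinv : V⁻¹.PosDef := hV.inv
  have hVinvSymm : V⁻¹ᵀ = V⁻¹ := by
    have := hVinv.isHermitian
    simpa [IsHermitian] using this
  have hΛs := hΛ.posSemidef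
  set R := CFC.sqrt Λ with hRdef
  have hRR : R * R = Λ := CFC.sqrt_mul_sqrt_self Λ hΛs.nonneg
  have hRsymm : Rᵀ = R := by
    have := (CFC.sqrt_nonneg Λ).posSemidef.isHermitian
    simpa [IsHermitian] using this
  set u := V⁻¹ *ᵥ w with hu
  -- rewrite LHS
  have key : w ⬝ᵥ ((V⁻¹ * Λ) *ᵥ θ) = (R *ᵥ u) ⬝ᵥ (R *ᵥ θ) := by
    rw [← hRR, ← mulVec_mulVec, ← mulVec_mulVec, dotProduct_mulVec w,
      ← mulVec_transpose, hVinvSymm, ← hu, dotProduct_mulVec u, ← mulVec_transpose, hRsymm]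
  have hb : (R *ᵥ θ) ⬝ᵥ (R *ᵥ θ) = θ ⬝ᵥ (Λ *ᵥ θ) := by
    rw [dotProduct_mulVec, ← mulVec_transpose, hRsymm, mulVec_mulVec, hRR]
    exact dotProduct_comm _ _
  have ha : (R *ᵥ u) ⬝ᵥ (R *ᵥ u) = u ⬝ᵥ (Λ *ᵥ u) := by
    rw [dotProduct_mulVec, ← mulVec_transpose, hRsymm, mulVec_mulVec, hRR]
    exact dotProduct_comm _ _
  have hVu : V *ᵥ u = w := by
    rw [hu, mulVec_mulVec, mul_nonsing_inv _ (hV.det_pos.ne'.isUnit),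
      one_mulVec]
  have ha2 : u ⬝ᵥ (Λ *ᵥ u) ≤ w ⬝ᵥ (V⁻¹ *ᵥ w) := by
    have hMu : 0 ≤ u ⬝ᵥ (M *ᵥ u) := by simpa using hM.dotProduct_mulVec_nonneg u
    have : u ⬝ᵥ (V *ᵥ u) = u ⬝ᵥ (Λ *ᵥ u) + u ⬝ᵥ (M *ᵥ u) := by
      rw [hVdef, add_mulVec, dotProduct_add]
    have heq : u ⬝ᵥ (V *ᵥ u) = w ⬝ᵥ (V⁻¹ *ᵥ w) := by
      rw [hVu, ← hu, dotProduct_comm]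
    linarith
  calc |w ⬝ᵥ ((V⁻¹ * Λ) *ᵥ θ)| = |(R *ᵥ u) ⬝ᵥ (R *ᵥ θ)| := by rw [key]
    _ = |(R *ᵥ θ) ⬝ᵥ (R *ᵥ u)| := by rw [dotProduct_comm]
    _ ≤ Real.sqrt ((R *ᵥ θ) ⬝ᵥ (R *ᵥ θ)) * Real.sqrt ((R *ᵥ u) ⬝ᵥ (R *ᵥ u)) :=
        abs_dotProduct_le_sqrt _ _
    _ ≤ Real.sqrt (θ ⬝ᵥ (Λ *ᵥ θ)) * Real.sqrt (w ⬝ᵥ (V⁻¹ *ᵥ w)) := by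
        rw [hb]
        exact mul_le_mul_of_nonneg_left (Real.sqrt_le_sqrt (ha ▸ ha2)) (Real.sqrt_nonneg _)
end

section
/- Let W ∈ ℝ^{n×p} be a matrix, Λ ∈ ℝ^{p×p} symmetric positive definite, V := WᵀW + Λ, θ* ∈ ℝ^p, η ∈ ℝ^n, and θ̂ := V⁻¹ Wᵀ (Wθ* + η). Then for every w ∈ ℝ^p, |wᵀ(θ̂ − θ*)| ≤ ‖θ*‖_Λ · ‖w‖_{V⁻¹} + |wᵀ V⁻¹ Wᵀ η|, where ‖x‖_A := √(xᵀAx) for a positive semidefinite matrix A. -/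
open Matrix

private lemma dot_cauchy {p : ℕ} (x y : Fin p → ℝ) :
    |x ⬝ᵥ y| ≤ Real.sqrt (x ⬝ᵥ x) * Real.sqrt (y ⬝ᵥ y) := by
  have key : ∀ a : Fin p → ℝ, a ⬝ᵥ y ≤ Real.sqrt (a ⬝ᵥ a) * Real.sqrt (y ⬝ᵥ y) := by
    intro a
    have h := Real.sum_mul_le_sqrt_mul_sqrt Finset.univ a y
    simpa [dotProduct, pow_two] using h
  rw [abs_le]
  refine ⟨?_, key x⟩
  have h := key (-x)
  have hxx : (-x) ⬝ᵥ (-x) = x ⬝ᵥ x := by simp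
  rw [hxx, neg_dotProduct] at h
  exact neg_le.mp h

open scoped MatrixOrder in
private lemma psd_cauchy {p : ℕ} {A : Matrix (Fin p) (Fin p) ℝ} (hA : A.PosSemidef)
    (x y : Fin p → ℝ) :
    |x ⬝ᵥ (A *ᵥ y)| ≤ Real.sqrt (x ⬝ᵥ (A *ᵥ x)) * Real.sqrt (y ⬝ᵥ (A *ᵥ y)) := by
  set S := CFC.sqrt A with hSdef
  have hSS : S * S = A := CFC.sqrt_mul_sqrt_self A hA.nonneg
  have hSsym : Sᵀ = S := by
    have h := (CFC.sqrt_nonneg A).posSemidef.isHermitian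
    rwa [IsHermitian, conjTranspose_eq_transpose_of_trivial] at h
  have key : ∀ a b : Fin p → ℝ, a ⬝ᵥ (A *ᵥ b) = (S *ᵥ a) ⬝ᵥ (S *ᵥ b) := by
    intro a b
    rw [← hSS, ← mulVec_mulVec, dotProduct_mulVec]
    congr 1
    rw [← mulVec_transpose, hSsym]
  rw [key x y, key x x, key y y]
  exact dot_cauchy _ _

/-- Let `W ∈ ℝ^{n×p}`, `Λ ∈ ℝ^{p×p}` symmetric positive definite, `V := WᵀW + Λ`,
`θ* ∈ ℝ^p`, `η ∈ ℝ^n`, and `θ̂ := V⁻¹ Wᵀ (Wθ* + η)`. Then for every `w ∈ ℝ^p`,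
`|wᵀ(θ̂ − θ*)| ≤ ‖θ*‖_Λ ⬝ ‖w‖_{V⁻¹} + |wᵀ V⁻¹ Wᵀ η|`, where `‖x‖_A := √(xᵀ A x)`. -/
theorem reg_least_squares_error_bound {n p : ℕ}
    (W : Matrix (Fin n) (Fin p) ℝ) (Λ : Matrix (Fin p) (Fin p) ℝ) (hΛ : Λ.PosDef)
    (θstar : Fin p → ℝ) (η : Fin n → ℝ)
    (V : Matrix (Fin p) (Fin p) ℝ) (hV : V = Wᵀ * W + Λ)
    (θhat : Fin p → ℝ) (hθhat : θhat = (V⁻¹ * Wᵀ) *ᵥ (W *ᵥ θstar + η))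
    (w : Fin p → ℝ) :
    |w ⬝ᵥ (θhat - θstar)| ≤
      Real.sqrt (θstar ⬝ᵥ (Λ *ᵥ θstar)) * Real.sqrt (w ⬝ᵥ (V⁻¹ *ᵥ w))
        + |w ⬝ᵥ ((V⁻¹ * Wᵀ) *ᵥ η)| := by
  have hWtW : (Wᵀ * W).PosSemidef := by
    have h := posSemidef_conjTranspose_mul_self W
    rwa [conjTranspose_eq_transpose_of_trivial] at h
  have hVpd : V.PosDef := hV ▸ Matrix.PosDef.posSemidef_add hWtW hΛ
  have hVinv : (V⁻¹).PosDef := hVpd.inv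
  have hdet : IsUnit V.det := hVpd.det_pos.ne'.isUnit
  have hVinvV : V⁻¹ * V = 1 := nonsing_inv_mul V hdet
  have hVVinv : V * V⁻¹ = 1 := mul_nonsing_inv V hdet
  have hVinvsym : (V⁻¹)ᵀ = V⁻¹ := by
    have h := hVinv.isHermitian
    rwa [IsHermitian, conjTranspose_eq_transpose_of_trivial] at h
  -- decomposition
  have hdecomp : θhat - θstar = -(V⁻¹ *ᵥ (Λ *ᵥ θstar)) + (V⁻¹ * Wᵀ) *ᵥ η := by
    rw [hθhat, mulVec_add]
    have h1 : (V⁻¹ * Wᵀ) *ᵥ (W *ᵥ θstar) = θstar - V⁻¹ *ᵥ (Λ *ᵥ θstar) := by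
      rw [mulVec_mulVec, Matrix.mul_assoc]
      have hWW : Wᵀ * W = V - Λ := by rw [hV, add_sub_cancel_right]
      rw [hWW, Matrix.mul_sub, hVinvV, Matrix.sub_mulVec, Matrix.one_mulVec,
        ← mulVec_mulVec]
    rw [h1]
    funext i
    simp [Pi.sub_apply]
    ring
  rw [hdecomp]
  have hsplit : w ⬝ᵥ (-(V⁻¹ *ᵥ (Λ *ᵥ θstar)) + (V⁻¹ * Wᵀ) *ᵥ η)
      = -(w ⬝ᵥ (V⁻¹ *ᵥ (Λ *ᵥ θstar))) + w ⬝ᵥ ((V⁻¹ * Wᵀ) *ᵥ η) := by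
    rw [dotProduct_add, dotProduct_neg]
  rw [hsplit]
  refine (abs_add_le _ _).trans ?_
  rw [abs_neg]
  gcongr
  -- bound the bias term
  set u := V⁻¹ *ᵥ w with hu
  have ht : w ⬝ᵥ (V⁻¹ *ᵥ (Λ *ᵥ θstar)) = u ⬝ᵥ (Λ *ᵥ θstar) := by
    rw [dotProduct_mulVec w V⁻¹, ← mulVec_transpose, hVinvsym]
  have hcs := psd_cauchy hΛ.posSemidef u θstar
  have huw : w ⬝ᵥ (V⁻¹ *ᵥ w) = u ⬝ᵥ (V *ᵥ u) := by
    have hw : V *ᵥ u = w := by rw [hu, mulVec_mulVec, hVVinv, one_mulVec]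
    rw [dotProduct_comm, ← hw, mulVec_mulVec, hVinvV, one_mulVec]
  have hle : u ⬝ᵥ (Λ *ᵥ u) ≤ w ⬝ᵥ (V⁻¹ *ᵥ w) := by
    rw [huw]
    have h0 : 0 ≤ u ⬝ᵥ ((Wᵀ * W) *ᵥ u) := by simpa using hWtW.dotProduct_mulVec_nonneg u
    have hVu : u ⬝ᵥ (V *ᵥ u) = u ⬝ᵥ ((Wᵀ * W) *ᵥ u) + u ⬝ᵥ (Λ *ᵥ u) := by
      rw [hV, add_mulVec, dotProduct_add]
    linarith
  calc |w ⬝ᵥ (V⁻¹ *ᵥ (Λ *ᵥ θstar))|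
      ≤ Real.sqrt (u ⬝ᵥ (Λ *ᵥ u)) * Real.sqrt (θstar ⬝ᵥ (Λ *ᵥ θstar)) := by
        rw [ht]; exact hcs
    _ ≤ Real.sqrt (θstar ⬝ᵥ (Λ *ᵥ θstar)) * Real.sqrt (w ⬝ᵥ (V⁻¹ *ᵥ w)) := by
        rw [mul_comm]
        exact mul_le_mul_of_nonneg_left (Real.sqrt_le_sqrt hle) (Real.sqrt_nonneg _)
end

section
/- Let p, k, n be natural numbers with 1 ≤ k ≤ p and n ≥ 1, let λ > 0, and set λ⊥ := n / (k · log(1 + n/λ)). Let Λ ∈ ℝ^{p×p} be the diagonal matrix whose first k diagonal entries equal λ and whose remaining p − k diagonal entries equal λ⊥. If w₁, …, w_n ∈ ℝ^p satisfy ‖w_s‖₂ ≤ 1 for all s, then log det(Λ + Σ_{s=1}^n w_s w_sᵀ) − log det Λ ≤ 2 k log(1 + n/λ). -/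
open Matrix

lemma trace_eq_sum_eigs {m : ℕ} {A : Matrix (Fin m) (Fin m) ℝ} (hA : A.IsHermitian) :
    A.trace = ∑ i, hA.eigenvalues i := by
  conv_lhs => rw [hA.spectral_theorem]
  rw [Unitary.conjStarAlgAut_apply, Matrix.trace_mul_comm, ← Matrix.mul_assoc, Unitary.coe_star_mul_self, Matrix.one_mul]
  simp [Matrix.trace_diagonal]

lemma amgm_prod_le_one {m : ℕ} (hm : 0 < m) (z : Fin m → ℝ) (hz : ∀ i, 0 ≤ z i)
    (hsum : ∑ i, z i ≤ m) : ∏ i, z i ≤ 1 := by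
  have hm' : (0:ℝ) < m := by exact_mod_cast hm
  have h := Real.geom_mean_le_arith_mean_weighted Finset.univ (fun _ => 1/(m:ℝ)) z
    (fun i _ => by positivity) (by simp [Finset.sum_const]; field_simp) (fun i _ => hz i)
  have h2 : ∑ i, (1/(m:ℝ)) * z i ≤ 1 := by
    rw [← Finset.mul_sum]
    rw [div_mul_eq_mul_div, one_mul, div_le_one hm']
    exact hsum
  have h3 : (∏ i, z i) ^ (1/(m:ℝ)) ≤ 1 := by
    rw [← Real.finset_prod_rpow _ _ (fun i _ => hz i)]
    exact h.trans h2
  by_contra hlt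
  push_neg at hlt
  have := Real.one_lt_rpow_iff_of_pos (x := ∏ i, z i) (by linarith) (y := 1/(m:ℝ))
  have : 1 < (∏ i, z i) ^ (1/(m:ℝ)) := this.mpr (Or.inl ⟨hlt, by positivity⟩)
  linarith

lemma posdef_det_le_prod_diag {m : ℕ} {A : Matrix (Fin m) (Fin m) ℝ} (hA : A.PosDef) :
    A.det ≤ ∏ i, A i i := by
  rcases Nat.eq_zero_or_pos m with hm | hm
  · subst hm; simp [Matrix.det_fin_zero]
  have hd : ∀ i, 0 < A i i := by
    intro i
    exact hA.diag_pos
  set e : Fin m → ℝ := fun i => (Real.sqrt (A i i))⁻¹ with he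
  have hepos : ∀ i, 0 < e i := fun i => inv_pos.mpr (Real.sqrt_pos.mpr (hd i))
  set D : Matrix (Fin m) (Fin m) ℝ := Matrix.diagonal e with hD
  have hDh : Dᴴ = D := by simp [hD, Matrix.diagonal_conjTranspose]
  have hB : (D * A * D).PosSemidef := by
    have := hA.posSemidef.conjTranspose_mul_mul_same D
    rwa [hDh] at this
  have hBdiag : ∀ i, (D * A * D) i i = 1 := by
    intro i
    rw [Matrix.mul_diagonal, Matrix.diagonal_mul]
    have h1 : Real.sqrt (A i i) * Real.sqrt (A i i) = A i i := Real.mul_self_sqrt (hd i).le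
    rw [show e i * A i i * e i = A i i / (Real.sqrt (A i i) * Real.sqrt (A i i)) by
      rw [he]; ring, h1, div_self (hd i).ne']
  have htr : (D * A * D).trace = m := by
    rw [Matrix.trace]
    simp only [Matrix.diag_apply, hBdiag]
    simp
  have hsum : ∑ i, hB.1.eigenvalues i ≤ m := by
    rw [← trace_eq_sum_eigs hB.1, htr]
  have hprod : ∏ i, hB.1.eigenvalues i = (D * A * D).det := by
    rw [hB.1.det_eq_prod_eigenvalues]; norm_num
  have hdet1 : (D * A * D).det ≤ 1 :=
    hprod ▸ amgm_prod_le_one hm _ (fun i => hB.eigenvalues_nonneg i) hsum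
  have hdetD : D.det = ∏ i, e i := by simp [hD]
  have hDA : (D * A * D).det = (∏ i, e i)^2 * A.det := by
    rw [Matrix.det_mul, Matrix.det_mul, hdetD]; ring
  have hE : (∏ i, e i)^2 = (∏ i, A i i)⁻¹ := by
    rw [← Finset.prod_pow, ← Finset.prod_inv_distrib]
    refine Finset.prod_congr rfl fun i _ => ?_
    show ((Real.sqrt (A i i))⁻¹)^2 = (A i i)⁻¹
    rw [← Real.sqrt_inv]
    exact Real.sq_sqrt (inv_nonneg.mpr (hd i).le)
  have hp : (0:ℝ) < ∏ i, A i i := Finset.prod_pos (fun i _ => hd i)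
  rw [hDA, hE, inv_mul_le_iff₀ hp] at hdet1
  simpa using hdet1

lemma posSemidef_vecMulVec {m : ℕ} (v : Fin m → ℝ) : (Matrix.vecMulVec v v).PosSemidef := by
  rw [Matrix.posSemidef_iff_dotProduct_mulVec]
  constructor
  · ext i j
    simp [Matrix.conjTranspose_apply, Matrix.vecMulVec_apply, mul_comm]
  · intro x
    have : dotProduct (star x) (Matrix.vecMulVec v v *ᵥ x) = (v ⬝ᵥ x) * (v ⬝ᵥ x) := by
      simp [dotProduct, Matrix.mulVec, Matrix.vecMulVec_apply, Finset.mul_sum,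
        Finset.sum_mul]
      rw [Finset.sum_comm]
      apply Finset.sum_congr rfl; intro i _
      apply Finset.sum_congr rfl; intro j _
      ring
    rw [this]
    exact mul_self_nonneg _

lemma posSemidef_sum_vecMulVec {n m : ℕ} (w : Fin n → Fin m → ℝ) :
    (∑ s, Matrix.vecMulVec (w s) (w s)).PosSemidef := by
  induction (Finset.univ : Finset (Fin n)) using Finset.induction_on with
  | empty => simp [Matrix.PosSemidef.zero]
  | insert _ _ h ih => rw [Finset.sum_insert h]; exact (posSemidef_vecMulVec _).add ih

/-- Let `1 ≤ k ≤ p`, `n ≥ 1`, `λ > 0`, and `λ⊥ := n / (k ⬝ log(1 + n/λ))`. Let `Λ` be the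
diagonal matrix whose first `k` diagonal entries equal `λ` and whose remaining `p − k`
entries equal `λ⊥`. If `w₁, …, w_n ∈ ℝ^p` satisfy `‖w_s‖₂ ≤ 1` for all `s`, then
`log det(Λ + Σ_s w_s w_sᵀ) − log det Λ ≤ 2 k log(1 + n/λ)`. -/
theorem logdet_ratio_effective_dimension {p k n : ℕ}
    (hk : 1 ≤ k) (hkp : k ≤ p) (hn : 1 ≤ n) (lam : ℝ) (hlam : 0 < lam)
    (lamPerp : ℝ) (hlamPerp : lamPerp = (n : ℝ) / ((k : ℝ) * Real.log (1 + (n : ℝ) / lam)))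
    (Λ : Matrix (Fin p) (Fin p) ℝ)
    (hΛ : Λ = Matrix.diagonal (fun i : Fin p => if (i : ℕ) < k then lam else lamPerp))
    (w : Fin n → Fin p → ℝ) (hw : ∀ s, Real.sqrt (∑ i, (w s i) ^ 2) ≤ 1) :
    Real.log (Λ + ∑ s, Matrix.vecMulVec (w s) (w s)).det - Real.log Λ.det ≤
      2 * (k : ℝ) * Real.log (1 + (n : ℝ) / lam) := by
  have hn' : (0:ℝ) < n := by exact_mod_cast hn
  have hk' : (0:ℝ) < k := by exact_mod_cast hk
  set L := Real.log (1 + (n : ℝ) / lam) with hL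
  have hLpos : 0 < L := Real.log_pos (by
    have : 0 < (n:ℝ)/lam := div_pos hn' hlam
    linarith)
  have hperp : 0 < lamPerp := by rw [hlamPerp]; positivity
  set Λd : Fin p → ℝ := fun i => if (i : ℕ) < k then lam else lamPerp with hΛd
  have hΛdpos : ∀ i, 0 < Λd i := fun i => by
    by_cases h : (i:ℕ) < k <;> simp [hΛd, h, hlam, hperp]
  set c : Fin p → ℝ := fun i => ∑ s, (w s i)^2 with hc
  have hcnn : ∀ i, 0 ≤ c i := fun i => Finset.sum_nonneg fun s _ => sq_nonneg _
  have hwsum : ∀ s, ∑ i, (w s i)^2 ≤ 1 := by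
    intro s
    have h0 : 0 ≤ ∑ i, (w s i)^2 := Finset.sum_nonneg fun i _ => sq_nonneg _
    nlinarith [Real.sq_sqrt h0, Real.sqrt_nonneg (∑ i, (w s i)^2), hw s]
  have hctot : ∑ i, c i ≤ n := by
    rw [hc, Finset.sum_comm]
    calc ∑ s, ∑ i, (w s i)^2 ≤ ∑ s : Fin n, (1:ℝ) := Finset.sum_le_sum fun s _ => hwsum s
      _ = n := by simp
  have hΛpd : Λ.PosDef := hΛ ▸ Matrix.PosDef.diagonal hΛdpos
  have hV : (Λ + ∑ s, Matrix.vecMulVec (w s) (w s)).PosDef :=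
    hΛpd.add_posSemidef (posSemidef_sum_vecMulVec w)
  have hVdiag : ∀ i, (Λ + ∑ s, Matrix.vecMulVec (w s) (w s)) i i = Λd i + c i := by
    intro i
    simp [hΛ, Matrix.add_apply, Matrix.sum_apply, Matrix.vecMulVec_apply, hc, sq]
  have hlogV : Real.log (Λ + ∑ s, Matrix.vecMulVec (w s) (w s)).det
      ≤ ∑ i, Real.log (Λd i + c i) := by
    have h1 : (Λ + ∑ s, Matrix.vecMulVec (w s) (w s)).det ≤ ∏ i, (Λd i + c i) := by
      have h2 := posdef_det_le_prod_diag hV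
      calc (Λ + ∑ s, Matrix.vecMulVec (w s) (w s)).det
          ≤ ∏ i, (Λ + ∑ s, Matrix.vecMulVec (w s) (w s)) i i := h2
        _ = ∏ i, (Λd i + c i) := Finset.prod_congr rfl fun i _ => hVdiag i
    calc Real.log (Λ + ∑ s, Matrix.vecMulVec (w s) (w s)).det
        ≤ Real.log (∏ i, (Λd i + c i)) := by
          apply Real.log_le_log hV.det_pos h1
      _ = ∑ i, Real.log (Λd i + c i) := Real.log_prod fun i _ => by
          have := hΛdpos i; have := hcnn i; positivity
  have hlogΛ : Real.log Λ.det = ∑ i, Real.log (Λd i) := by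
    rw [hΛ, Matrix.det_diagonal, Real.log_prod]
    exact fun i _ => (hΛdpos i).ne'
  have hterm : ∀ i : Fin p, Real.log (Λd i + c i) - Real.log (Λd i)
      ≤ (if (i:ℕ) < k then L else 0) + c i / lamPerp := by
    intro i
    by_cases h : (i:ℕ) < k
    · simp only [hΛd, h, if_true]
      have hci : c i ≤ n :=
        le_trans (Finset.single_le_sum (fun j _ => hcnn j) (Finset.mem_univ i)) hctot
      have heq : Real.log (lam + c i) - Real.log lam = Real.log ((lam + c i)/lam) :=
        (Real.log_div (by have := hcnn i; positivity) hlam.ne').symm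
      rw [heq]
      have h2 : (lam + c i)/lam ≤ 1 + (n:ℝ)/lam := by
        rw [add_div, div_self hlam.ne']
        have : c i / lam ≤ (n:ℝ)/lam := by gcongr
        linarith
      have h3 : Real.log ((lam + c i)/lam) ≤ L := by
        rw [hL]
        apply Real.log_le_log (by have := hcnn i; positivity) h2
      have h4 : 0 ≤ c i / lamPerp := div_nonneg (hcnn i) hperp.le
      linarith
    · simp only [hΛd, h, if_false]
      have heq : Real.log (lamPerp + c i) - Real.log lamPerp
          = Real.log (1 + c i / lamPerp) := by
        rw [← Real.log_div (by have := hcnn i; positivity) hperp.ne']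
        congr 1
        field_simp
      rw [heq]
      have h5 : Real.log (1 + c i / lamPerp) ≤ c i / lamPerp := by
        have := Real.log_le_sub_one_of_pos
          (show (0:ℝ) < 1 + c i / lamPerp by have := div_nonneg (hcnn i) hperp.le; linarith)
        linarith
      linarith
  have hsum1 : ∑ i : Fin p, (if (i:ℕ) < k then L else 0) = k * L := by
    rw [Fin.sum_univ_eq_sum_range (fun j => if j < k then L else 0) p]
    rw [← Finset.sum_subset (Finset.range_subset_range.mpr hkp)
      (fun x _ hx => by simp [Finset.mem_range, not_lt] at hx; simp [not_lt.mpr hx])]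
    have h6 : ∑ x ∈ Finset.range k, (if x < k then L else 0) = ∑ _x ∈ Finset.range k, L :=
      Finset.sum_congr rfl (fun x hx => by simp [Finset.mem_range.mp hx])
    rw [h6, Finset.sum_const, Finset.card_range, nsmul_eq_mul]
  have hnperp : (n:ℝ) / lamPerp = k * L := by
    rw [hlamPerp]
    field_simp
  have hfinal : ∑ i, (Real.log (Λd i + c i) - Real.log (Λd i)) ≤ 2 * k * L := by
    calc ∑ i, (Real.log (Λd i + c i) - Real.log (Λd i))
        ≤ ∑ i : Fin p, ((if (i:ℕ) < k then L else 0) + c i / lamPerp) :=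
          Finset.sum_le_sum fun i _ => hterm i
      _ = (k * L) + (∑ i, c i) / lamPerp := by
          rw [Finset.sum_add_distrib, hsum1, Finset.sum_div]
      _ ≤ (k * L) + (n:ℝ) / lamPerp := by gcongr
      _ = 2 * k * L := by rw [hnperp]; ring
  calc Real.log (Λ + ∑ s, Matrix.vecMulVec (w s) (w s)).det - Real.log Λ.det
      ≤ ∑ i, Real.log (Λd i + c i) - ∑ i, Real.log (Λd i) := by
        rw [hlogΛ]; linarith
    _ = ∑ i, (Real.log (Λd i + c i) - Real.log (Λd i)) := by rw [Finset.sum_sub_distrib]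
    _ ≤ 2 * k * L := hfinal
end
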